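/- Let S be a nonempty set of positive finite Borel measures on ℝ which is sequentially compact in the vague topology (every sequence in S has a vaguely convergent subsequence with limit in S) and uniformly bounded in total mass. Then inf_{σ ∈ S} σ(ℝ) = sup_{L > 0} inf_{σ ∈ S} σ((-L,L)). -/

import Mathlib

open MeasureTheory Filter
open scoped ENNReal

/-- `μₙ → μ` vaguely: convergence of integrals of all continuous functions
vanishing at infinity. -/
def VagueTendsto (μs : ℕ → Measure ℝ) (μ : Measure ℝ) : Prop :=
  ∀ f : ℝ → ℝ, Continuous f → Tendsto f (cocompact ℝ) (nhds 0) →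
    Tendsto (fun n => ∫ t, f t ∂(μs n)) atTop (nhds (∫ t, f t ∂μ))

/-- A continuous bump which is `1` on `[-M, M]` and `0` outside `[-(M+1), M+1]`. -/
lemma exists_bump (M : ℝ) (hM : 0 ≤ M) :
    ∃ f : ℝ → ℝ, Continuous f ∧ (∀ x, 0 ≤ f x) ∧ (∀ x, f x ≤ 1) ∧
      (∀ x ∈ Set.Icc (-M) M, f x = 1) ∧
      (∀ x ∉ Set.Icc (-(M+1)) (M+1), f x = 0) := by
  set K : Set ℝ := Set.Icc (-M) M with hK
  have hKne : K.Nonempty := ⟨0, by simp [hK, hM]⟩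
  refine ⟨fun x => max (1 - Metric.infDist x K) 0,
    ((continuous_const.sub (Metric.continuous_infDist_pt K)).max continuous_const),
    fun x => le_max_right _ _, fun x => ?_, fun x hx => ?_, fun x hx => ?_⟩
  · have := Metric.infDist_nonneg (x := x) (s := K)
    simp only [max_le_iff]
    constructor <;> linarith
  · show max (1 - Metric.infDist x K) 0 = 1
    rw [Metric.infDist_zero_of_mem hx]
    simp
  · have h1 : ¬ Metric.infDist x K < 1 := by
      rw [Metric.infDist_lt_iff hKne]
      rintro ⟨y, hy, hd⟩
      rw [Real.dist_eq] at hd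
      rw [Set.mem_Icc] at hy
      have : x ∈ Set.Icc (-(M+1)) (M+1) := by
        rw [Set.mem_Icc]
        cases abs_lt.mp hd with
        | intro h2 h3 => constructor <;> linarith
      exact hx this
    push_neg at h1
    have : 1 - Metric.infDist x K ≤ 0 := by linarith
    simp [max_eq_right this]

/-- If `S` is a nonempty, vaguely sequentially compact, uniformly mass-bounded
set of finite measures on `ℝ`, then
`inf_{σ ∈ S} σ(ℝ) = sup_{L > 0} inf_{σ ∈ S} σ((-L,L))`. -/
theorem inf_mass_eq_sup_inf_interval (S : Set (Measure ℝ))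
    (hne : S.Nonempty)
    (hfin : ∀ σ ∈ S, IsFiniteMeasure σ)
    (hbdd : ∃ C : ℝ≥0∞, C < ⊤ ∧ ∀ σ ∈ S, σ Set.univ ≤ C)
    (hcpt : ∀ σs : ℕ → Measure ℝ, (∀ n, σs n ∈ S) →
      ∃ μ ∈ S, ∃ g : ℕ → ℕ, StrictMono g ∧ VagueTendsto (fun n => σs (g n)) μ) :
    sInf ((fun σ : Measure ℝ => (σ Set.univ).toReal) '' S) =
      sSup {r : ℝ | ∃ L : ℝ, 0 < L ∧
        r = sInf ((fun σ : Measure ℝ => (σ (Set.Ioo (-L) L)).toReal) '' S)} := by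
  classical
  obtain ⟨C, hCtop, hCle⟩ := hbdd
  obtain ⟨σ₀, hσ₀⟩ := hne
  -- generic facts
  have hbb : ∀ (F : Measure ℝ → ℝ≥0∞),
      BddBelow ((fun σ : Measure ℝ => (F σ).toReal) '' S) := by
    intro F
    exact ⟨0, fun r hr => by
      obtain ⟨σ, -, rfl⟩ := hr; exact ENNReal.toReal_nonneg⟩
  have hmono : ∀ σ ∈ S, ∀ s t : Set ℝ, s ⊆ t → (σ s).toReal ≤ (σ t).toReal := by
    intro σ hσ s t hst
    haveI := hfin σ hσ
    exact ENNReal.toReal_mono (measure_ne_top σ t) (measure_mono hst)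
  set A := sInf ((fun σ : Measure ℝ => (σ Set.univ).toReal) '' S) with hAdef
  set T := {r : ℝ | ∃ L : ℝ, 0 < L ∧
      r = sInf ((fun σ : Measure ℝ => (σ (Set.Ioo (-L) L)).toReal) '' S)} with hTdef
  have hTne : T.Nonempty := ⟨_, 1, one_pos, rfl⟩
  have hTbdd : BddAbove T := by
    refine ⟨C.toReal, fun r hr => ?_⟩
    obtain ⟨L, hL, rfl⟩ := hr
    refine le_trans (csInf_le (hbb _) ⟨σ₀, hσ₀, rfl⟩) ?_
    refine le_trans (hmono σ₀ hσ₀ _ _ (Set.subset_univ _)) ?_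
    exact ENNReal.toReal_mono hCtop.ne (hCle σ₀ hσ₀)
  set B := sSup T with hBdef
  refine le_antisymm ?_ ?_
  swap
  · -- easy direction: B ≤ A
    refine csSup_le hTne ?_
    rintro r ⟨L, hL, rfl⟩
    refine le_csInf (Set.Nonempty.image _ ⟨σ₀, hσ₀⟩) ?_
    rintro a ⟨σ, hσ, rfl⟩
    exact le_trans (csInf_le (hbb _) ⟨σ, hσ, rfl⟩)
      (hmono σ hσ _ _ (Set.subset_univ _))
  · -- hard direction: A ≤ B
    by_contra hlt
    push_neg at hlt
    set c : ℝ := (A + B) / 2 with hc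
    have hBc : B < c := by rw [hc]; linarith
    have hcA : c < A := by rw [hc]; linarith
    -- choose σs n with small mass on (-(n+1), n+1)
    have hchoice : ∀ n : ℕ, ∃ σ ∈ S,
        (σ (Set.Ioo (-((n : ℝ) + 1)) ((n : ℝ) + 1))).toReal < c := by
      intro n
      have hmemT : sInf ((fun σ : Measure ℝ =>
          (σ (Set.Ioo (-((n : ℝ) + 1)) ((n : ℝ) + 1))).toReal) '' S) ∈ T :=
        ⟨(n : ℝ) + 1, by positivity, rfl⟩
      have h1 : sInf ((fun σ : Measure ℝ =>
          (σ (Set.Ioo (-((n : ℝ) + 1)) ((n : ℝ) + 1))).toReal) '' S) < c :=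
        lt_of_le_of_lt (le_csSup hTbdd hmemT) hBc
      obtain ⟨a, ⟨σ, hσ, rfl⟩, ha⟩ := exists_lt_of_csInf_lt (Set.Nonempty.image _ ⟨σ₀, hσ₀⟩) h1
      exact ⟨σ, hσ, ha⟩
    choose σs hσsS hσslt using hchoice
    obtain ⟨μ, hμS, g, hg, hconv⟩ := hcpt σs hσsS
    haveI := hfin μ hμS
    -- key: μ(Icc (-m) m) ≤ c for all m
    have hkey : ∀ m : ℕ, (μ (Set.Icc (-(m : ℝ)) m)).toReal ≤ c := by
      intro m
      obtain ⟨f, hf, hf0, hf1, hfone, hfzero⟩ := exists_bump (m : ℝ) (Nat.cast_nonneg m)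
      have hcs : HasCompactSupport f := HasCompactSupport.intro isCompact_Icc hfzero
      have hftends : Tendsto f (cocompact ℝ) (nhds 0) := by
        refine Tendsto.congr' ?_ tendsto_const_nhds
        rw [Filter.EventuallyEq, Filter.eventually_iff, mem_cocompact]
        exact ⟨Set.Icc (-((m : ℝ) + 1)) ((m : ℝ) + 1), isCompact_Icc,
          fun x hx => (hfzero x hx).symm⟩
      have hintμ : Integrable f μ := hf.integrable_of_hasCompactSupport hcs
      have step1 : (μ (Set.Icc (-(m : ℝ)) m)).toReal ≤ ∫ t, f t ∂μ := by
        rw [← measureReal_def, ← MeasureTheory.integral_indicator_one measurableSet_Icc]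
        refine integral_mono ((integrable_const (1 : ℝ)).indicator measurableSet_Icc)
          hintμ ?_
        intro x
        by_cases hx : x ∈ Set.Icc (-(m : ℝ)) m
        · rw [Set.indicator_of_mem hx, Pi.one_apply, hfone x hx]
        · rw [Set.indicator_of_notMem hx]; exact hf0 x
      have step2 : ∫ t, f t ∂μ ≤ c := by
        refine le_of_tendsto (hconv f hf hftends) ?_
        filter_upwards [eventually_ge_atTop (m + 1)] with n hn
        haveI := hfin (σs (g n)) (hσsS (g n))
        have hgn : (m : ℝ) + 1 ≤ (g n : ℝ) := by
          have : m + 1 ≤ g n := le_trans hn hg.le_apply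
          exact_mod_cast this
        have hsub : Set.Icc (-((m : ℝ) + 1)) ((m : ℝ) + 1) ⊆
            Set.Ioo (-((g n : ℝ) + 1)) ((g n : ℝ) + 1) := by
          intro x hx
          rw [Set.mem_Icc] at hx
          rw [Set.mem_Ioo]
          constructor <;> [linarith [hx.1]; linarith [hx.2]]
        have h1 : ∫ t, f t ∂(σs (g n)) ≤
            (σs (g n) (Set.Icc (-((m : ℝ) + 1)) ((m : ℝ) + 1))).toReal := by
          rw [← measureReal_def, ← MeasureTheory.integral_indicator_one measurableSet_Icc]
          refine integral_mono (hf.integrable_of_hasCompactSupport hcs)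
            ((integrable_const (1 : ℝ)).indicator measurableSet_Icc) ?_
          intro x
          by_cases hx : x ∈ Set.Icc (-((m : ℝ) + 1)) ((m : ℝ) + 1)
          · rw [Set.indicator_of_mem hx, Pi.one_apply]; exact hf1 x
          · rw [Set.indicator_of_notMem hx, hfzero x hx]
        refine le_trans h1 (le_trans (hmono _ (hσsS (g n)) _ _ hsub) ?_)
        exact (hσslt (g n)).le
      exact le_trans step1 step2
    -- conclude μ(univ) ≤ c
    have hmonoset : Monotone (fun m : ℕ => Set.Icc (-(m : ℝ)) (m : ℝ)) := by
      intro a b hab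
      apply Set.Icc_subset_Icc <;> [simp [Nat.cast_le.mpr hab]; exact_mod_cast hab]
    have hunion : (⋃ m : ℕ, Set.Icc (-(m : ℝ)) (m : ℝ)) = Set.univ := by
      apply Set.eq_univ_of_forall
      intro x
      refine Set.mem_iUnion.mpr ⟨⌈|x|⌉₊, ?_⟩
      have h1 : |x| ≤ (⌈|x|⌉₊ : ℝ) := Nat.le_ceil _
      rw [Set.mem_Icc]
      cases abs_le.mp h1 with
      | intro h2 h3 => exact ⟨h2, h3⟩
    have htend : Tendsto (fun m : ℕ => (μ (Set.Icc (-(m : ℝ)) (m : ℝ))).toReal)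
        atTop (nhds (μ Set.univ).toReal) := by
      have h1 := tendsto_measure_iUnion_atTop (μ := μ) hmonoset
      rw [hunion] at h1
      exact (ENNReal.tendsto_toReal (measure_ne_top μ _)).comp h1
    have hμc : (μ Set.univ).toReal ≤ c := le_of_tendsto htend (Eventually.of_forall hkey)
    have hAμ : A ≤ (μ Set.univ).toReal := csInf_le (hbb _) ⟨μ, hμS, rfl⟩
    linarith
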